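/- Let S be a function from probability distributions on finite sets to ℝ satisfying: (i) S is continuous on distributions over each fixed finite set; (ii) S(λp ⊕ (1-λ)q) = λS(p) + (1-λ)S(q) + S(λ, 1-λ) for all p, q, λ ∈ [0,1]; (iii) S is invariant under bijections of the underlying set; (iv) S of a point mass is 0; and (v) S(p) ≥ S(f_*p) for every function f. Then there is c ≥ 0 with S(p) = -c ∑_x p_x log p_x for all p. -/

import Mathlib

open Filter Finset Topology

set_option maxHeartbeats 1000000


lemma erdos_tendsto (f : ℕ → ℝ)
    (hadd : ∀ a b : ℕ, 1 ≤ a → 1 ≤ b → f (a * b) = f a + f b)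
    (hdiff : Tendsto (fun n => f (n + 1) - f n) atTop (𝓝 0))
    {m : ℕ} (hm : 2 ≤ m) :
    Tendsto (fun n : ℕ => f n / Real.log n) atTop (𝓝 (f m / Real.log m)) := by
  have hm1 : (1:ℝ) < (m:ℝ) := by exact_mod_cast hm
  have hmnat : 1 < m := hm
  have hm0 : 0 < m := by omega
  have hlm : 0 < Real.log m := Real.log_pos hm1
  rw [Metric.tendsto_nhds]
  intro δ' hδ'
  set δ : ℝ := δ' * Real.log m / 4 with hδdef
  have hδ : 0 < δ := by positivity
  have hδm : 0 < δ / m := by positivity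
  obtain ⟨J, hJ⟩ := Metric.tendsto_atTop.1 hdiff (δ / m) hδm
  set rr : ℕ → ℝ := fun N => f N - f m - f (N / m) with hrrdef
  -- Lemma R : residual small for large N
  have hR : ∀ N, m * (J + 1) ≤ N → |rr N| ≤ δ := by
    intro N hN
    have hq1 : J + 1 ≤ N / m := (Nat.le_div_iff_mul_le hm0).2 (by rw [mul_comm]; exact hN)
    have hdm := Nat.div_add_mod N m
    have hmod := Nat.mod_lt N hm0
    set q := N / m with hq
    have hle : m * q ≤ N := by omega
    have hfmq : f (m * q) = f m + f q := hadd m q (by omega) (by omega)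
    have htel : ∑ i ∈ range (N - m*q), (f (m*q + i + 1) - f (m*q + i)) = f N - f (m*q) := by
      have := Finset.sum_range_sub (fun i => f (m*q + i)) (N - m*q)
      simpa [Nat.add_sub_cancel' hle, add_assoc] using this
    have hcard : N - m * q < m := by omega
    have hterm : ∀ i ∈ range (N - m*q), |f (m*q + i + 1) - f (m*q + i)| ≤ δ / m := by
      intro i _
      have hJi : J ≤ m*q + i := by nlinarith [hq1, Nat.le_mul_of_pos_left q hm0]
      have := hJ (m*q+i) hJi
      rw [Real.dist_eq, sub_zero] at this
      exact le_of_lt this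
    have : |rr N| = |f N - f (m*q)| := by
      rw [hrrdef]; simp only [hfmq]; ring_nf; rfl
    rw [this, ← htel]
    calc |∑ i ∈ range (N - m*q), (f (m*q + i + 1) - f (m*q + i))|
        ≤ ∑ i ∈ range (N - m*q), |f (m*q + i + 1) - f (m*q + i)| := abs_sum_le_sum_abs _ _
      _ ≤ ((N - m*q : ℕ) : ℝ) * (δ / m) := by
          have := Finset.sum_le_card_nsmul (range (N - m*q)) _ (δ/m) hterm
          simpa [card_range, nsmul_eq_mul] using this
      _ ≤ m * (δ / m) := by
          have : ((N - m*q : ℕ) : ℝ) ≤ (m:ℝ) := by exact_mod_cast le_of_lt hcard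
          nlinarith [le_of_lt hδm]
      _ = δ := by field_simp
  -- telescoping
  have htele : ∀ (k n : ℕ), f n = k * f m + f (n / m ^ k) + ∑ i ∈ range k, rr (n / m ^ i) := by
    intro k
    induction k with
    | zero => intro n; simp
    | succ k ih =>
        intro n
        rw [sum_range_succ, pow_succ, ← Nat.div_div_eq_div_mul]
        have h2 : rr (n / m^k) = f (n/m^k) - f m - f (n/m^k/m) := rfl
        have := ih n
        push_cast
        linarith
  set L := Nat.log m (m * (J + 1)) + 1 with hLdef
  have hLpow : m * (J+1) < m ^ L := Nat.lt_pow_succ_log_self hmnat _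
  set B2 : ℝ := ∑ N ∈ range (m ^ L), |rr N| with hB2def
  have hB2 : ∀ N, N < m ^ L → |rr N| ≤ B2 := fun N hN =>
    Finset.single_le_sum (f := fun N => |rr N|) (fun i _ => abs_nonneg _) (mem_range.2 hN)
  have hB2nn : 0 ≤ B2 := Finset.sum_nonneg fun i _ => abs_nonneg _
  set B3 : ℝ := ∑ j ∈ range (m+1), |f j| with hB3def
  have hB3 : ∀ u, u ≤ m → |f u| ≤ B3 := fun u hu =>
    Finset.single_le_sum (f := fun j => |f j|) (fun i _ => abs_nonneg _) (mem_range.2 (by omega))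
  set C : ℝ := L * B2 + B3 with hCdef
  have hCnn : 0 ≤ C := by
    have : 0 ≤ B3 := Finset.sum_nonneg fun i _ => abs_nonneg _
    positivity
  have hlogTop : Tendsto (fun n : ℕ => Real.log n) atTop atTop :=
    Real.tendsto_log_atTop.comp tendsto_natCast_atTop_atTop
  have h0 : Tendsto (fun n : ℕ => (C + |f m|) / Real.log n) atTop (𝓝 0) :=
    tendsto_const_nhds.div_atTop hlogTop
  have ev1 : ∀ᶠ n : ℕ in atTop, (C + |f m|) / Real.log n < δ' / 2 := by
    have := h0.eventually (gt_mem_nhds (show (0:ℝ) < δ'/2 by linarith))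
    exact this
  filter_upwards [ev1, eventually_ge_atTop 2] with n hev hn2
  -- main computation
  set k := Nat.log m n with hkdef
  have hn0 : n ≠ 0 := by omega
  have hpow_le : m ^ k ≤ n := Nat.pow_log_le_self m hn0
  have hlt : n < m ^ (k+1) := Nat.lt_pow_succ_log_self hmnat n
  have hlogn_pos : 0 < Real.log n := Real.log_pos (by exact_mod_cast hn2)
  have hkl : (k:ℝ) * Real.log m ≤ Real.log n := by
    have : Real.log ((m:ℝ)^k) ≤ Real.log n :=
      Real.log_le_log (by positivity) (by exact_mod_cast hpow_le)
    rwa [Real.log_pow] at this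
  have hku : Real.log n ≤ ((k:ℝ)+1) * Real.log m := by
    have : Real.log n ≤ Real.log ((m:ℝ)^(k+1)) :=
      Real.log_le_log (by positivity) (by exact_mod_cast le_of_lt hlt)
    rwa [Real.log_pow, Nat.cast_add, Nat.cast_one] at this
  have hdecomp := htele k n
  set u := n / m ^ k with hudef
  have hu_le : u ≤ m := by
    have h1 : n < m ^ k * m := by rw [← pow_succ]; exact hlt
    have h2 : u < m := by
      rw [hudef, Nat.div_lt_iff_lt_mul (pow_pos hm0 k)]
      linarith [h1]
    omega
  have hfu : |f u| ≤ B3 := hB3 u hu_le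
  -- bound the residual sum
  have hRbound : |∑ i ∈ range k, rr (n / m ^ i)| ≤ k * δ + L * B2 := by
    have step1 : |∑ i ∈ range k, rr (n / m ^ i)| ≤ ∑ i ∈ range k, |rr (n / m ^ i)| :=
      abs_sum_le_sum_abs _ _
    have step2 : ∑ i ∈ range k, |rr (n / m ^ i)| ≤
        ∑ i ∈ range k, (δ + if n / m^i < m^L then B2 else 0) := by
      apply Finset.sum_le_sum
      intro i hi
      by_cases hc : n / m^i < m^L
      · simp only [hc, if_true]
        have := hB2 _ hc
        linarith
      · simp only [hc, if_false]
        push_neg at hc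
        have : m * (J+1) ≤ n / m ^ i := le_trans (le_of_lt hLpow) hc
        have := hR _ this
        linarith
    have step3 : ∑ i ∈ range k, (δ + if n / m^i < m^L then B2 else 0)
        = k * δ + ∑ i ∈ range k, (if n / m^i < m^L then B2 else 0) := by
      rw [Finset.sum_add_distrib, Finset.sum_const, card_range, nsmul_eq_mul]
    have hsub : (range k).filter (fun i => n/m^i < m^L) ⊆ Ico (k - L) k := by
      intro i hi
      rw [mem_filter, mem_range] at hi
      rw [mem_Ico]
      refine ⟨?_, hi.1⟩
      have h1 : m ^ (k - i) ≤ n / m ^ i := by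
        rw [Nat.le_div_iff_mul_le (pow_pos hm0 i), ← pow_add]
        have : k - i + i = k := by omega
        rw [this]; exact hpow_le
      have h2 : m ^ (k-i) < m ^ L := lt_of_le_of_lt h1 hi.2
      have h3 : k - i < L := (Nat.pow_lt_pow_iff_right hmnat).1 h2
      omega
    have step4 : ∑ i ∈ range k, (if n / m^i < m^L then B2 else 0) ≤ L * B2 := by
      rw [← Finset.sum_filter]
      have hc1 : ((range k).filter (fun i => n/m^i < m^L)).card ≤ L := by
        have := Finset.card_le_card hsub
        rw [Nat.card_Ico] at this
        omega
      calc ∑ _i ∈ (range k).filter (fun i => n/m^i < m^L), B2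
          = ((range k).filter (fun i => n/m^i < m^L)).card * B2 := by
            rw [Finset.sum_const, nsmul_eq_mul]
        _ ≤ L * B2 := by
            apply mul_le_mul_of_nonneg_right _ hB2nn
            exact_mod_cast hc1
    linarith
  have key : |f n - k * f m| ≤ k * δ + C := by
    have heq : f n - k * f m = f u + ∑ i ∈ range k, rr (n / m ^ i) := by linarith [hdecomp]
    rw [heq]
    calc |f u + ∑ i ∈ range k, rr (n / m ^ i)|
        ≤ |f u| + |∑ i ∈ range k, rr (n / m ^ i)| := abs_add_le _ _
      _ ≤ B3 + (k * δ + L * B2) := add_le_add hfu hRbound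
      _ = k * δ + C := by rw [hCdef]; ring
  rw [Real.dist_eq]
  have split : f n/Real.log n - f m/Real.log m
      = (f n - k*f m)/Real.log n + (f m * ((k*Real.log m) - Real.log n))/(Real.log n * Real.log m) := by
    field_simp
    ring
  have habs2 : |(k:ℝ)*Real.log m - Real.log n| ≤ Real.log m := by
    rw [abs_le]
    constructor <;> nlinarith
  have est1 : |(f n - k*f m)/Real.log n| ≤ (k * δ + C)/Real.log n := by
    rw [abs_div, abs_of_pos hlogn_pos]
    gcongr
  have est2 : |(f m * ((k*Real.log m) - Real.log n))/(Real.log n * Real.log m)| ≤ |f m| / Real.log n := by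
    rw [abs_div, abs_mul, abs_of_pos (mul_pos hlogn_pos hlm)]
    calc |f m| * |(k:ℝ)*Real.log m - Real.log n| / (Real.log n * Real.log m)
        ≤ |f m| * Real.log m / (Real.log n * Real.log m) := by gcongr
      _ = |f m| / Real.log n := by
          field_simp
  have est3 : (k:ℝ) * δ / Real.log n ≤ δ / Real.log m := by
    rw [div_le_div_iff₀ hlogn_pos hlm]
    nlinarith [hkl, hδ.le]
  have hδq : δ / Real.log m = δ' / 4 := by
    rw [hδdef]; field_simp
  calc |f n/Real.log n - f m/Real.log m|
      ≤ |(f n - k*f m)/Real.log n| + |(f m * ((k*Real.log m) - Real.log n))/(Real.log n * Real.log m)| := by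
        rw [split]; exact abs_add_le _ _
    _ ≤ (k * δ + C)/Real.log n + |f m| / Real.log n := add_le_add est1 est2
    _ = (k:ℝ)*δ/Real.log n + (C + |f m|)/Real.log n := by ring
    _ ≤ δ/Real.log m + (C + |f m|)/Real.log n := by linarith
    _ < δ'/4 + δ'/2 := by rw [hδq]; linarith [hev]
    _ < δ' := by linarith

lemma erdos_log (f : ℕ → ℝ)
    (hadd : ∀ a b : ℕ, 1 ≤ a → 1 ≤ b → f (a * b) = f a + f b)
    (hdiff : Tendsto (fun n => f (n + 1) - f n) atTop (𝓝 0)) :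
    ∀ n : ℕ, 1 ≤ n → f n = f 2 / Real.log 2 * Real.log n := by
  have hf1 : f 1 = 0 := by have := hadd 1 1 le_rfl le_rfl; simp at this; linarith
  intro n hn
  rcases eq_or_lt_of_le hn with h1 | h2
  · rw [← h1]; simp [hf1]
  · have hmn : 2 ≤ n := h2
    have t1 := erdos_tendsto f hadd hdiff (le_refl 2)
    have t2 := erdos_tendsto f hadd hdiff hmn
    have huniq := tendsto_nhds_unique t1 t2
    have hln : Real.log n ≠ 0 := ne_of_gt (Real.log_pos (by exact_mod_cast hmn))
    have h2' : Real.log ((2:ℕ):ℝ) = Real.log 2 := by norm_num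
    rw [h2'] at huniq
    field_simp at huniq ⊢
    linarith [huniq]



open Classical in
/-- The pushforward of a distribution `p` on `X` along a function `f : X → Y`. -/
noncomputable def pushfwd {X Y : Type} [Fintype X] (f : X → Y) (p : X → ℝ) : Y → ℝ :=
  fun y => ∑ x, if f x = y then p x else 0

/-- A probability distribution on a finite set. -/
def IsDist {X : Type} [Fintype X] (p : X → ℝ) : Prop :=
  (∀ x, 0 ≤ p x) ∧ ∑ x, p x = 1

/-- Faddeev/BFL characterization of Shannon entropy: a function S on
probability distributions on finite sets that is (i) continuous on the distributions
over each fixed finite set, (ii) satisfies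
S(λp ⊕ (1-λ)q) = λ S(p) + (1-λ) S(q) + S(λ, 1-λ), (iii) is invariant under bijections,
(iv) vanishes on point masses, and (v) satisfies S(p) ≥ S(f_* p) for every function f,
must be of the form S(p) = -c ∑_x p x log (p x) for some constant c ≥ 0. -/
theorem faddeev_BFL_characterization
    (S : ∀ {X : Type} [Fintype X], (X → ℝ) → ℝ)
    (hcont : ∀ (X : Type) [Fintype X],
      ContinuousOn (fun p : X → ℝ => S p) {p | IsDist p})
    (hmix : ∀ (X Y : Type) [Fintype X] [Fintype Y] (p : X → ℝ) (q : Y → ℝ)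
      (l : ℝ), IsDist p → IsDist q → 0 ≤ l → l ≤ 1 →
      S (Sum.elim (fun x => l * p x) (fun y => (1 - l) * q y)) =
        l * S p + (1 - l) * S q + S (fun b : Bool => if b then l else 1 - l))
    (hbij : ∀ (X Y : Type) [Fintype X] [Fintype Y] (e : X ≃ Y) (p : X → ℝ),
      IsDist p → S (p ∘ e.symm) = S p)
    (hpoint : ∀ (X : Type) [Fintype X] [DecidableEq X] (x : X),
      S (fun y => if y = x then (1 : ℝ) else 0) = 0)
    (hmono : ∀ (X Y : Type) [Fintype X] [Fintype Y] (f : X → Y) (p : X → ℝ),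
      IsDist p → S (pushfwd f p) ≤ S p) :
    ∃ c : ℝ, 0 ≤ c ∧ ∀ (X : Type) [Fintype X] (p : X → ℝ), IsDist p →
      S p = -c * ∑ x, p x * Real.log (p x) := by
  classical
  set hB : ℝ → ℝ := fun t => S (fun b : Bool => if b then t else 1 - t) with hBdef
  have hpt1 : S (fun _ : Fin 1 => (1:ℝ)) = 0 := by
    have h := hpoint (Fin 1) 0
    have he : (fun y : Fin 1 => if y = 0 then (1:ℝ) else 0) = fun _ => 1 := by
      funext y; simp [Subsingleton.elim y 0]
    rwa [he] at h
  have hB0 : hB 0 = 0 := by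
    have h := hpoint Bool false
    have he : (fun y : Bool => if y = false then (1:ℝ) else 0)
        = (fun b : Bool => if b then (0:ℝ) else 1 - 0) := by
      funext b; cases b <;> norm_num
    show S (fun b : Bool => if b then (0:ℝ) else 1 - 0) = 0
    rw [← he]; exact h
  have hB1 : hB 1 = 0 := by
    have h := hpoint Bool true
    have he : (fun y : Bool => if y = true then (1:ℝ) else 0)
        = (fun b : Bool => if b then (1:ℝ) else 1 - 1) := by
      funext b; cases b <;> norm_num
    show S (fun b : Bool => if b then (1:ℝ) else 1 - 1) = 0
    rw [← he]; exact h
  -- the mixing lemma transported to Fin (a+b)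
  have hsum_dist : ∀ (a b : ℕ) (p : Fin a → ℝ) (q : Fin b → ℝ) (l : ℝ),
      IsDist p → IsDist q → 0 ≤ l → l ≤ 1 →
      IsDist (Sum.elim (fun x => l * p x) (fun y => (1 - l) * q y)) := by
    intro a b p q l hp hq hl0 hl1
    constructor
    · intro x
      cases x with
      | inl x => exact mul_nonneg hl0 (hp.1 x)
      | inr y => exact mul_nonneg (by linarith) (hq.1 y)
    · rw [Fintype.sum_sum_type]
      simp only [Sum.elim_inl, Sum.elim_inr]
      rw [← Finset.mul_sum, ← Finset.mul_sum, hp.2, hq.2]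
      ring
  have mixS : ∀ (a b : ℕ) (p : Fin a → ℝ) (q : Fin b → ℝ) (l : ℝ),
      IsDist p → IsDist q → 0 ≤ l → l ≤ 1 →
      S ((Sum.elim (fun x => l * p x) (fun y => (1 - l) * q y)) ∘ finSumFinEquiv.symm)
        = l * S p + (1 - l) * S q + hB l := by
    intro a b p q l hp hq hl0 hl1
    rw [hbij _ _ finSumFinEquiv _ (hsum_dist a b p q l hp hq hl0 hl1)]
    exact hmix _ _ p q l hp hq hl0 hl1
  have feq : ∀ {a b : ℕ} (F : Fin a ⊕ Fin b → ℝ) (G : Fin (a+b) → ℝ),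
      (∀ s, F s = G (finSumFinEquiv s)) → F ∘ finSumFinEquiv.symm = G := by
    intro a b F G hfg
    funext x
    simp only [Function.comp_apply]
    rw [hfg, Equiv.apply_symm_apply]
  -- uniform distributions
  set f : ℕ → ℝ := fun n => S (fun _ : Fin n => (n:ℝ)⁻¹) with hfdef
  have hudist : ∀ n : ℕ, 1 ≤ n → IsDist (fun _ : Fin n => (n:ℝ)⁻¹) := by
    intro n hn
    have hn0 : (0:ℝ) < n := by exact_mod_cast hn
    constructor
    · intro x; positivity
    · rw [Finset.sum_const, Finset.card_univ, Fintype.card_fin, nsmul_eq_mul]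
      field_simp
  have hpt1' : IsDist (fun _ : Fin 1 => (1:ℝ)) := ⟨fun _ => zero_le_one, by simp⟩
  have hf1 : f 1 = 0 := by
    rw [hfdef]
    simp only [Nat.cast_one, inv_one]
    exact hpt1
  -- recursion for uniform distributions
  have hfrec : ∀ n : ℕ, 1 ≤ n →
      f (n+1) = ((n:ℝ)/((n:ℝ)+1)) * f n + hB ((n:ℝ)/((n:ℝ)+1)) := by
    intro n hn
    have hn0 : (0:ℝ) < n := by exact_mod_cast hn
    have hl0 : (0:ℝ) ≤ (n:ℝ)/((n:ℝ)+1) := by positivity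
    have hl1 : ((n:ℝ)/((n:ℝ)+1)) ≤ 1 := by
      rw [div_le_one (by positivity)]; linarith
    have hmain := mixS n 1 (fun _ => (n:ℝ)⁻¹) (fun _ => 1) ((n:ℝ)/((n:ℝ)+1))
      (hudist n hn) hpt1' hl0 hl1
    have heqf : (Sum.elim (fun _ : Fin n => ((n:ℝ)/((n:ℝ)+1)) * (n:ℝ)⁻¹)
        (fun _ : Fin 1 => (1 - (n:ℝ)/((n:ℝ)+1)) * 1)) ∘ finSumFinEquiv.symm
        = (fun _ : Fin (n+1) => ((n+1:ℕ):ℝ)⁻¹) := by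
      apply feq
      intro s
      cases s with
      | inl x =>
          simp only [Sum.elim_inl]
          push_cast
          field_simp
          try ring
      | inr y =>
          simp only [Sum.elim_inr]
          push_cast
          field_simp
          try ring
    rw [heqf] at hmain
    rw [hpt1] at hmain
    rw [hfdef]
    simp only []
    rw [hmain]
    ring
  -- additivity
  have hfmul : ∀ m n : ℕ, 1 ≤ m → 1 ≤ n → f (m * n) = f m + f n := by
    intro m n hm hn
    induction m, hm using Nat.le_induction with
    | base => rw [one_mul, hf1, zero_add]
    | succ m hm ih =>
        have hm0 : (0:ℝ) < m := by exact_mod_cast hm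
        have hn0 : (0:ℝ) < n := by exact_mod_cast hn
        have hl0 : (0:ℝ) ≤ (m:ℝ)/((m:ℝ)+1) := by positivity
        have hl1 : ((m:ℝ)/((m:ℝ)+1)) ≤ 1 := by
          rw [div_le_one (by positivity)]; linarith
        have hmn : 1 ≤ m * n := Nat.one_le_iff_ne_zero.2 (by positivity)
        have hmain := mixS (m*n) n (fun _ => ((m*n : ℕ):ℝ)⁻¹) (fun _ => (n:ℝ)⁻¹)
          ((m:ℝ)/((m:ℝ)+1)) (hudist (m*n) hmn) (hudist n hn) hl0 hl1
        have heqf : (Sum.elim (fun _ : Fin (m*n) => ((m:ℝ)/((m:ℝ)+1)) * ((m*n:ℕ):ℝ)⁻¹)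
            (fun _ : Fin n => (1 - (m:ℝ)/((m:ℝ)+1)) * (n:ℝ)⁻¹)) ∘ finSumFinEquiv.symm
            = (fun _ : Fin (m*n+n) => ((m*n+n:ℕ):ℝ)⁻¹) := by
          apply feq
          intro s
          cases s with
          | inl x =>
              simp only [Sum.elim_inl]
              push_cast
              field_simp
          | inr y =>
              simp only [Sum.elim_inr]
              push_cast
              field_simp
              ring
        rw [heqf] at hmain
        have hsm : (m+1) * n = m*n + n := by ring
        rw [hsm]
        have hfm1 := hfrec m hm
        -- hmain : f (m*n+n) = l * f (m*n) + (1-l) * f n + hB l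
        have hmain' : f (m*n+n) = ((m:ℝ)/((m:ℝ)+1)) * f (m*n)
            + (1 - (m:ℝ)/((m:ℝ)+1)) * f n + hB ((m:ℝ)/((m:ℝ)+1)) := hmain
        rw [ih] at hmain'
        rw [hmain', hfm1]
        ring
  -- continuity of hB on [0,1]
  have hBcont : ContinuousOn hB (Set.Icc (0:ℝ) 1) := by
    have hphi : Continuous (fun t : ℝ => (fun b : Bool => if b then t else 1 - t)) := by
      apply continuous_pi
      intro b
      cases b
      · simp only [Bool.false_eq_true, if_false]; exact continuous_const.sub continuous_id
      · simpa using continuous_id'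
    have hmaps : Set.MapsTo (fun t : ℝ => (fun b : Bool => if b then t else 1 - t))
        (Set.Icc (0:ℝ) 1) {p : Bool → ℝ | IsDist p} := by
      intro t ht
      simp only [Set.mem_setOf_eq]
      constructor
      · intro b
        cases b
        · simp only [Bool.false_eq_true, if_false]
          linarith [ht.2]
        · simp only [if_true]
          exact ht.1
      · rw [Fintype.sum_bool]
        simp only [if_true, Bool.false_eq_true, if_false]
        ring
    have := ContinuousOn.comp (hcont Bool) hphi.continuousOn hmaps
    exact this
  -- n/(n+1) tends to 1
  have hratio : Tendsto (fun n : ℕ => (n:ℝ)/((n:ℝ)+1)) atTop (𝓝 1) := by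
    have heq : (fun n : ℕ => (n:ℝ)/((n:ℝ)+1)) = fun n : ℕ => 1 - 1/((n:ℝ)+1) := by
      funext n
      have hne : (n:ℝ)+1 ≠ 0 := by positivity
      field_simp
      ring
    rw [heq]
    have h2 : Tendsto (fun n : ℕ => 1/((n:ℝ)+1)) atTop (𝓝 0) :=
      tendsto_one_div_add_atTop_nhds_zero_nat
    simpa using (tendsto_const_nhds.sub h2)
  have hratio_mem : ∀ n : ℕ, (n:ℝ)/((n:ℝ)+1) ∈ Set.Icc (0:ℝ) 1 := by
    intro n
    have h0 : (0:ℝ) ≤ n := Nat.cast_nonneg n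
    constructor
    · positivity
    · rw [div_le_one (by positivity)]; linarith
  have hctend : Tendsto (fun n : ℕ => hB ((n:ℝ)/((n:ℝ)+1))) atTop (𝓝 0) := by
    have h1 : ContinuousWithinAt hB (Set.Icc (0:ℝ) 1) 1 := hBcont 1 (by norm_num)
    have h2 : Tendsto (fun n : ℕ => (n:ℝ)/((n:ℝ)+1)) atTop (𝓝[Set.Icc (0:ℝ) 1] 1) :=
      tendsto_nhdsWithin_of_tendsto_nhds_of_eventually_within _ hratio
        (Eventually.of_forall hratio_mem)
    have h3 := h1.tendsto.comp h2
    rwa [hB1] at h3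
  have hcesaro : Tendsto (fun n : ℕ => (n:ℝ)⁻¹ * ∑ k ∈ range n, |hB ((k:ℝ)/((k:ℝ)+1))|)
      atTop (𝓝 0) := by
    have habs0 : Tendsto (fun k : ℕ => |hB ((k:ℝ)/((k:ℝ)+1))|) atTop (𝓝 0) := by
      simpa using hctend.abs
    exact habs0.cesaro
  -- telescoping for n * f n
  have hgsum : ∀ n : ℕ, (n:ℝ) * f n = ∑ k ∈ range n, (((k:ℝ)+1) * hB ((k:ℝ)/((k:ℝ)+1))) := by
    intro n
    induction n with
    | zero => simp
    | succ n ih =>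
        rw [Finset.sum_range_succ, ← ih]
        rcases Nat.eq_zero_or_pos n with h0 | h1
        · subst h0
          norm_num [hf1, hB0]
        · have hrec := hfrec n h1
          have hn0 : (0:ℝ) < n := by exact_mod_cast h1
          have hne : ((n:ℝ)+1) ≠ 0 := by positivity
          push_cast
          rw [hrec]
          field_simp
  have habsf : ∀ n : ℕ, 1 ≤ n → |f n| ≤ ∑ k ∈ range n, |hB ((k:ℝ)/((k:ℝ)+1))| := by
    intro n hn
    have hn0 : (0:ℝ) < n := by exact_mod_cast hn
    have h1 : (n:ℝ) * |f n| = |(n:ℝ) * f n| := by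
      rw [abs_mul, abs_of_pos hn0]
    have h2 : |(n:ℝ) * f n| ≤ ∑ k ∈ range n, (n:ℝ) * |hB ((k:ℝ)/((k:ℝ)+1))| := by
      rw [hgsum n]
      refine le_trans (abs_sum_le_sum_abs _ _) (Finset.sum_le_sum ?_)
      intro k hk
      rw [abs_mul]
      have hk1 : ((k:ℝ)+1) ≤ (n:ℝ) := by
        have := Finset.mem_range.1 hk
        exact_mod_cast Nat.succ_le_of_lt this
      have habs1 : |((k:ℝ)+1)| = (k:ℝ)+1 := abs_of_pos (by positivity)
      rw [habs1]
      exact mul_le_mul_of_nonneg_right hk1 (abs_nonneg _)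
    rw [← Finset.mul_sum] at h2
    rw [← h1] at h2
    exact le_of_mul_le_mul_left h2 hn0
  have hfdivn : Tendsto (fun n : ℕ => f n / ((n:ℝ)+1)) atTop (𝓝 0) := by
    apply squeeze_zero_norm'
      (a := fun n : ℕ => (n:ℝ)⁻¹ * ∑ k ∈ range n, |hB ((k:ℝ)/((k:ℝ)+1))|)
    · filter_upwards [eventually_ge_atTop 1] with n hn
      have hn0 : (0:ℝ) < n := by exact_mod_cast hn
      have hsnn : (0:ℝ) ≤ ∑ k ∈ range n, |hB ((k:ℝ)/((k:ℝ)+1))| :=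
        Finset.sum_nonneg fun k _ => abs_nonneg _
      rw [Real.norm_eq_abs, abs_div, abs_of_pos (by positivity : (0:ℝ) < (n:ℝ)+1)]
      calc |f n| / ((n:ℝ)+1) ≤ |f n| / (n:ℝ) := by gcongr; linarith
        _ ≤ (∑ k ∈ range n, |hB ((k:ℝ)/((k:ℝ)+1))|) / (n:ℝ) := by
            gcongr
            exact habsf n hn
        _ = (n:ℝ)⁻¹ * ∑ k ∈ range n, |hB ((k:ℝ)/((k:ℝ)+1))| := by
            rw [inv_mul_eq_div]
    · exact hcesaro
  have hdiff : Tendsto (fun n : ℕ => f (n+1) - f n) atTop (𝓝 0) := by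
    have heqd : ∀ᶠ n : ℕ in atTop,
        hB ((n:ℝ)/((n:ℝ)+1)) - f n/((n:ℝ)+1) = f (n+1) - f n := by
      filter_upwards [eventually_ge_atTop 1] with n hn
      have hrec := hfrec n hn
      have hn0 : (0:ℝ) < n := by exact_mod_cast hn
      have hne : ((n:ℝ)+1) ≠ 0 := by positivity
      rw [hrec]
      field_simp
      ring
    have h2 : Tendsto (fun n : ℕ => hB ((n:ℝ)/((n:ℝ)+1)) - f n/((n:ℝ)+1)) atTop (𝓝 0) := by
      simpa using hctend.sub hfdivn
    exact h2.congr' heqd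
  -- f is a multiple of log
  set c : ℝ := f 2 / Real.log 2 with hcdef
  have hflog : ∀ n : ℕ, 1 ≤ n → f n = c * Real.log n := fun n hn =>
    erdos_log f hfmul hdiff n hn
  have hf2 : 0 ≤ f 2 := by
    have hd : IsDist (fun _ : Fin 2 => ((2:ℕ):ℝ)⁻¹) := hudist 2 (by norm_num)
    have hm := hmono (Fin 2) (Fin 1) (fun _ => 0) _ hd
    have hpf : pushfwd (fun _ : Fin 2 => (0:Fin 1)) (fun _ : Fin 2 => ((2:ℕ):ℝ)⁻¹)
        = fun _ : Fin 1 => 1 := by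
      funext y
      rw [pushfwd]
      rw [Fin.eq_zero y]
      norm_num
    rw [hpf, hpt1] at hm
    exact hm
  have hc0 : 0 ≤ c := div_nonneg hf2 (Real.log_nonneg (by norm_num))
  -- rational values of hB
  have hrat : ∀ a b : ℕ, 1 ≤ a → 1 ≤ b →
      hB ((a:ℝ)/((a:ℝ)+(b:ℝ)))
        = c * (Real.negMulLog ((a:ℝ)/((a:ℝ)+(b:ℝ)))
            + Real.negMulLog (1 - (a:ℝ)/((a:ℝ)+(b:ℝ)))) := by
    intro a b ha hb
    have ha0 : (0:ℝ) < a := by exact_mod_cast ha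
    have hb0 : (0:ℝ) < b := by exact_mod_cast hb
    have hs0 : (0:ℝ) < (a:ℝ)+(b:ℝ) := by linarith
    have hl0 : (0:ℝ) ≤ (a:ℝ)/((a:ℝ)+(b:ℝ)) := by positivity
    have hl1 : (a:ℝ)/((a:ℝ)+(b:ℝ)) ≤ 1 := by rw [div_le_one hs0]; linarith
    have hab : 1 ≤ a + b := by omega
    have hmain := mixS a b (fun _ => (a:ℝ)⁻¹) (fun _ => (b:ℝ)⁻¹) ((a:ℝ)/((a:ℝ)+(b:ℝ)))
      (hudist a ha) (hudist b hb) hl0 hl1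
    have heqf : (Sum.elim (fun _ : Fin a => ((a:ℝ)/((a:ℝ)+(b:ℝ))) * (a:ℝ)⁻¹)
        (fun _ : Fin b => (1 - (a:ℝ)/((a:ℝ)+(b:ℝ))) * (b:ℝ)⁻¹)) ∘ finSumFinEquiv.symm
        = (fun _ : Fin (a+b) => ((a+b:ℕ):ℝ)⁻¹) := by
      apply feq
      intro s
      cases s with
      | inl x =>
          simp only [Sum.elim_inl]
          push_cast
          field_simp
          try ring
      | inr y =>
          simp only [Sum.elim_inr]
          push_cast
          field_simp
          try ring
    rw [heqf] at hmain
    have hmain' : f (a+b) = ((a:ℝ)/((a:ℝ)+(b:ℝ))) * f a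
        + (1 - (a:ℝ)/((a:ℝ)+(b:ℝ))) * f b + hB ((a:ℝ)/((a:ℝ)+(b:ℝ))) := hmain
    rw [hflog a ha, hflog b hb, hflog (a+b) hab] at hmain'
    have hlogc : Real.log ((a+b:ℕ):ℝ) = Real.log ((a:ℝ)+(b:ℝ)) := by push_cast; rfl
    rw [hlogc] at hmain'
    have e2 : 1 - (a:ℝ)/((a:ℝ)+(b:ℝ)) = (b:ℝ)/((a:ℝ)+(b:ℝ)) := by field_simp; ring
    rw [e2] at hmain' ⊢
    have e1 : Real.negMulLog ((a:ℝ)/((a:ℝ)+(b:ℝ)))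
        = -((a:ℝ)/((a:ℝ)+(b:ℝ))) * (Real.log a - Real.log ((a:ℝ)+(b:ℝ))) := by
      simp only [Real.negMulLog]
      rw [Real.log_div (ne_of_gt ha0) (ne_of_gt hs0)]
    have e3 : Real.negMulLog ((b:ℝ)/((a:ℝ)+(b:ℝ)))
        = -((b:ℝ)/((a:ℝ)+(b:ℝ))) * (Real.log b - Real.log ((a:ℝ)+(b:ℝ))) := by
      simp only [Real.negMulLog]
      rw [Real.log_div (ne_of_gt hb0) (ne_of_gt hs0)]
    rw [e1, e3]
    have hdiv : (a:ℝ)/((a:ℝ)+(b:ℝ)) + (b:ℝ)/((a:ℝ)+(b:ℝ)) = 1 := by field_simp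
    linear_combination (-1 : ℝ) * hmain' - c * Real.log ((a:ℝ)+(b:ℝ)) * hdiv
  -- the value of hB on all of [0,1]
  have hSc : Continuous (fun s : ℝ => c * (Real.negMulLog s + Real.negMulLog (1 - s))) :=
    continuous_const.mul (Real.continuous_negMulLog.add
      (Real.continuous_negMulLog.comp (continuous_const.sub continuous_id)))
  have hBval : ∀ t : ℝ, t ∈ Set.Icc (0:ℝ) 1 →
      hB t = c * (Real.negMulLog t + Real.negMulLog (1 - t)) := by
    intro t ht
    have htj : ∀ j : ℕ, 0 ≤ t * j := fun j => mul_nonneg ht.1 (Nat.cast_nonneg j)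
    have hfl : ∀ j : ℕ, Nat.floor (t * j) ≤ j := by
      intro j
      have h1 : t * (j:ℝ) ≤ ((j:ℝ)) := by nlinarith [ht.2, ht.1, (Nat.cast_nonneg j : (0:ℝ) ≤ j)]
      have h2 := Nat.floor_le_floor h1
      simpa using h2
    set r : ℕ → ℝ := fun j => ((Nat.floor (t * j) + 1 : ℕ):ℝ) /
      (((Nat.floor (t * j) + 1 : ℕ):ℝ) + (((j + 1) - Nat.floor (t * j) : ℕ):ℝ)) with hrdef
    have hrval : ∀ j : ℕ, r j = ((Nat.floor (t * j) : ℝ) + 1) / ((j:ℝ) + 2) := by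
      intro j
      have hsumn : (Nat.floor (t * j) + 1) + ((j + 1) - Nat.floor (t * j)) = j + 2 := by
        have := hfl j; omega
      simp only [hrdef]
      have hc2 : ((Nat.floor (t * j) + 1 : ℕ):ℝ) + (((j + 1) - Nat.floor (t * j) : ℕ):ℝ)
          = ((j:ℝ) + 2) := by
        rw [← Nat.cast_add, hsumn]; push_cast; ring
      rw [hc2]
      push_cast
      ring
    have hrtend : Tendsto r atTop (𝓝 t) := by
      rw [← tendsto_sub_nhds_zero_iff]
      apply squeeze_zero_norm' (a := fun j : ℕ => 2 / ((j:ℝ) + 2))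
      · apply Eventually.of_forall
        intro j
        have hj2 : (0:ℝ) < (j:ℝ) + 2 := by positivity
        have hub : t * (j:ℝ) < (Nat.floor (t*(j:ℝ)) : ℝ) + 1 := Nat.lt_floor_add_one _
        have hlb : (Nat.floor (t*(j:ℝ)) : ℝ) ≤ t * j := Nat.floor_le (htj j)
        have heq2 : r j - t = (((Nat.floor (t*(j:ℝ)):ℝ) + 1) - t*((j:ℝ)+2))/((j:ℝ)+2) := by
          rw [hrval j]; field_simp
        rw [Real.norm_eq_abs, heq2, abs_div, abs_of_pos hj2]
        gcongr
        rw [abs_le]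
        constructor <;> nlinarith [ht.1, ht.2]
      · exact Tendsto.div_atTop tendsto_const_nhds
          (tendsto_atTop_add_const_right atTop 2 tendsto_natCast_atTop_atTop)
    have hrmem : ∀ j : ℕ, r j ∈ Set.Icc (0:ℝ) 1 := by
      intro j
      rw [hrval j]
      constructor
      · positivity
      · rw [div_le_one (by positivity)]
        have h3 : (Nat.floor (t*(j:ℝ)):ℝ) ≤ (j:ℝ) := by exact_mod_cast hfl j
        linarith
    have hseq1 : Tendsto (fun j => hB (r j)) atTop (𝓝 (hB t)) := by
      have h1 : ContinuousWithinAt hB (Set.Icc (0:ℝ) 1) t := hBcont t ht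
      exact h1.tendsto.comp (tendsto_nhdsWithin_of_tendsto_nhds_of_eventually_within _ hrtend
        (Eventually.of_forall hrmem))
    have hseq2 : Tendsto (fun j => hB (r j)) atTop
        (𝓝 (c * (Real.negMulLog t + Real.negMulLog (1 - t)))) := by
      have heq : ∀ j, hB (r j) = c * (Real.negMulLog (r j) + Real.negMulLog (1 - r j)) := by
        intro j
        rw [hrdef]
        exact hrat (Nat.floor (t*(j:ℝ)) + 1) ((j+1) - Nat.floor (t*(j:ℝ))) (by omega)
          (by have := hfl j; omega)
      have h3 := (hSc.tendsto t).comp hrtend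
      exact h3.congr (fun j => (heq j).symm)
    exact tendsto_nhds_unique hseq1 hseq2
  -- the entropy formula on Fin n by induction
  have main : ∀ n : ℕ, ∀ p : Fin n → ℝ, IsDist p → S p = c * ∑ x, Real.negMulLog (p x) := by
    intro n
    induction n with
    | zero =>
        intro p hp
        exfalso
        have h := hp.2
        simp at h
    | succ n ih =>
        intro p hp
        have ht0 : 0 ≤ p (Fin.last n) := hp.1 _
        have hsum := hp.2
        rw [Fin.sum_univ_castSucc] at hsum
        have hcs_nonneg : 0 ≤ ∑ i : Fin n, p i.castSucc :=
          Finset.sum_nonneg fun i _ => hp.1 _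
        have ht1 : p (Fin.last n) ≤ 1 := by linarith
        rcases eq_or_lt_of_le ht1 with h1 | h1
        · -- point-mass case
          have hs0 : ∑ i : Fin n, p i.castSucc = 0 := by linarith
          have hz : ∀ i : Fin n, p i.castSucc = 0 := fun i =>
            (Finset.sum_eq_zero_iff_of_nonneg (fun j _ => hp.1 _)).1 hs0 i (Finset.mem_univ _)
          have hpe : p = fun y => if y = Fin.last n then (1:ℝ) else 0 := by
            funext y
            by_cases hy : y = Fin.last n
            · rw [hy, if_pos rfl]; exact h1
            · rw [if_neg hy]
              obtain ⟨i, rfl⟩ := Fin.exists_castSucc_eq.2 hy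
              exact hz i
          rw [hpe, hpoint]
          have hzs : ∑ x : Fin (n+1), Real.negMulLog (if x = Fin.last n then (1:ℝ) else 0) = 0 := by
            apply Finset.sum_eq_zero
            intro x _
            by_cases hx : x = Fin.last n
            · rw [if_pos hx]; exact Real.negMulLog_one
            · rw [if_neg hx]; exact Real.negMulLog_zero
          rw [hzs, mul_zero]
        · -- generic case
          set t := p (Fin.last n) with htdef
          have h1t : (0:ℝ) < 1 - t := by linarith
          set q : Fin n → ℝ := fun i => p i.castSucc / (1 - t) with hqdef
          have hqdist : IsDist q := by
            constructor
            · intro i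
              exact div_nonneg (hp.1 _) h1t.le
            · simp only [hqdef]
              rw [← Finset.sum_div]
              rw [show ∑ i : Fin n, p i.castSucc = 1 - t from by linarith]
              field_simp
          have hmain := mixS n 1 q (fun _ => 1) (1-t) hqdist hpt1' h1t.le (by linarith)
          have heqf : (Sum.elim (fun i : Fin n => (1-t) * q i)
              (fun _ : Fin 1 => (1 - (1-t)) * 1)) ∘ finSumFinEquiv.symm = p := by
            apply feq
            intro s
            cases s with
            | inl i =>
                simp only [Sum.elim_inl, hqdef]
                rw [mul_comm, div_mul_cancel₀ _ (ne_of_gt h1t)]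
                have he2 : finSumFinEquiv (Sum.inl i) = Fin.castSucc i := by
                  simp
                  rfl
                rw [he2]
            | inr u =>
                simp only [Sum.elim_inr]
                have hu : (u : Fin 1) = 0 := Subsingleton.elim _ _
                rw [hu]
                have he3 : finSumFinEquiv (Sum.inr (0 : Fin 1)) = Fin.last n := by
                  simp
                  ext
                  simp
                rw [he3, mul_one, sub_sub_cancel, htdef]
          rw [heqf, hpt1] at hmain
          rw [ih q hqdist] at hmain
          have hBv := hBval (1-t) ⟨h1t.le, by linarith⟩
          rw [sub_sub_cancel] at hBv
          rw [hBv] at hmain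
          rw [hmain]
          rw [Fin.sum_univ_castSucc]
          have hterm : ∀ i : Fin n, Real.negMulLog (p i.castSucc)
              = q i * Real.negMulLog (1-t) + (1-t) * Real.negMulLog (q i) := by
            intro i
            have hpi : p i.castSucc = (1-t) * q i := by
              simp only [hqdef]
              field_simp
            rw [hpi, Real.negMulLog_mul]
          rw [Finset.sum_congr rfl (fun i _ => hterm i)]
          rw [Finset.sum_add_distrib, ← Finset.sum_mul, ← Finset.mul_sum, hqdist.2]
          ring
  -- transfer to an arbitrary finite type
  refine ⟨c, hc0, ?_⟩
  intro X _ p hp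
  have e := Fintype.equivFin X
  have hpe : IsDist (p ∘ e.symm) := by
    constructor
    · intro i
      exact hp.1 _
    · rw [show ∑ i, (p ∘ e.symm) i = ∑ x, p x from Equiv.sum_comp e.symm p]
      exact hp.2
  have hb := hbij X (Fin (Fintype.card X)) e p hp
  have hm := main (Fintype.card X) (p ∘ e.symm) hpe
  rw [hb] at hm
  rw [hm]
  have hs : ∑ i, Real.negMulLog ((p ∘ e.symm) i) = ∑ x, Real.negMulLog (p x) :=
    Equiv.sum_comp e.symm (fun x => Real.negMulLog (p x))
  rw [hs]
  simp only [Real.negMulLog]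
  have hneg : ∑ x, (-p x * Real.log (p x)) = -∑ x, p x * Real.log (p x) := by
    rw [← Finset.sum_neg_distrib]
    apply Finset.sum_congr rfl
    intros
    ring
  rw [hneg]
  ring
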